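/- Fix an integer n > 1. Let W be a symmetric-form matrix whose parameters satisfy β = −α, a1+b1+n·(a2+b2) = 0, a1 ≥ 1, and a1+a2+α ≥ b1+b2+β+1, and suppose W minimizes ‖W‖_* among all symmetric-form matrices satisfying these same four conditions. Then for every i ∈ {1,…,n} the OOD margin is strictly negative: q_i < 0. (Theorem 2: failure of two-hop composition without identity supervision, as established in the proof.) -/

import Mathlib

/-- The nuclear norm of a real matrix: the trace of the positive semidefinite
square root of `Wᵀ * W` (equivalently, the sum of the singular values of `W`). -/
noncomputable def nuclearNorm {m k : Type*} [Fintype m] [Fintype k] [DecidableEq k]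
    (W : Matrix m k ℝ) : ℝ :=
  ((Matrix.posSemidef_conjTranspose_mul_self W).1.eigenvectorUnitary.1 *
    Matrix.diagonal (((↑) : ℝ → ℝ) ∘ (√·) ∘ (Matrix.posSemidef_conjTranspose_mul_self W).1.eigenvalues) *
    (star (Matrix.posSemidef_conjTranspose_mul_self W).1.eigenvectorUnitary :
      Matrix k k ℝ)).trace

/-- The symmetric-form matrix in `ℝ^{(2n+2)×(2n)}`.  Rows are indexed by the input
tokens `a_1,…,a_n` (`Sum.inl i`), `b_1,…,b_n` (`Sum.inr (Sum.inl i)`) and the relation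
tokens `r_1, r_2` (`Sum.inr (Sum.inr k)`, `k = 0, 1`); columns by the output tokens
`b_1,…,b_n` (`Sum.inl j`) and `c_1,…,c_n` (`Sum.inr j`). -/
def symW (n : ℕ) (a1 a2 b1 b2 α β : ℝ) :
    Matrix (Fin n ⊕ Fin n ⊕ Fin 2) (Fin n ⊕ Fin n) ℝ :=
  fun r y =>
    match r, y with
    | Sum.inl i, Sum.inl j => (if i = j then a1 else 0) + a2
    | Sum.inl i, Sum.inr j => (if i = j then b1 else 0) + b2
    | Sum.inr (Sum.inl i), Sum.inl j => (if i = j then b1 else 0) + b2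
    | Sum.inr (Sum.inl i), Sum.inr j => (if i = j then a1 else 0) + a2
    | Sum.inr (Sum.inr k), Sum.inl _ => if k = 0 then α else β
    | Sum.inr (Sum.inr k), Sum.inr _ => if k = 0 then β else α

/-- The OOD two-hop logit of output token `y` for input `(a_i, r_1, r_2)`:
`f_i(y) = W[a_i,y] + W[r_1,y] + W[r_2,y]`. -/
def oodLogit (n : ℕ) (W : Matrix (Fin n ⊕ Fin n ⊕ Fin 2) (Fin n ⊕ Fin n) ℝ)
    (i : Fin n) (y : Fin n ⊕ Fin n) : ℝ :=
  W (Sum.inl i) y + W (Sum.inr (Sum.inr 0)) y + W (Sum.inr (Sum.inr 1)) y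

/-- The OOD margin `q_i`: the minimum over output tokens `y ≠ c_i` of
`f_i(c_i) − f_i(y)`. -/
noncomputable def oodMargin (n : ℕ) (W : Matrix (Fin n ⊕ Fin n ⊕ Fin 2) (Fin n ⊕ Fin n) ℝ)
    (i : Fin n) : ℝ :=
  sInf {v : ℝ | ∃ y : Fin n ⊕ Fin n, y ≠ Sum.inr i ∧
    v = oodLogit n W i (Sum.inr i) - oodLogit n W i y}

lemma psd_sqrt_eq {k : Type*} [Fintype k] [DecidableEq k] (A S : Matrix k k ℝ)
    (hA : A.PosSemidef) (hS : S.PosSemidef) (h : S ^ 2 = A) :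
    S = hA.1.eigenvectorUnitary.1 *
      Matrix.diagonal (((↑) : ℝ → ℝ) ∘ (√·) ∘ hA.1.eigenvalues) *
      (star hA.1.eigenvectorUnitary : Matrix k k ℝ) := by
  have e : hA.1.eigenvectorUnitary.1 *
      Matrix.diagonal (((↑) : ℝ → ℝ) ∘ (√·) ∘ hA.1.eigenvalues) *
      (star hA.1.eigenvectorUnitary : Matrix k k ℝ) = cfc Real.sqrt A := by
    rw [Matrix.IsHermitian.cfc_eq hA.1, Matrix.IsHermitian.cfc, Unitary.conjStarAlgAut_apply]
    rfl
  rw [e, ← h, ← cfc_comp_pow (f := Real.sqrt) (n := 2) (a := S) (hf := Real.continuous_sqrt.continuousOn) (ha := hS.1.isSelfAdjoint)]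
  have hsp : ∀ x ∈ spectrum ℝ S, 0 ≤ x := by
    intro x hx
    rw [hS.1.spectrum_real_eq_range_eigenvalues] at hx
    obtain ⟨i, rfl⟩ := hx
    exact hS.eigenvalues_nonneg i
  rw [cfc_congr (a := S) (f := fun x => √(x ^ 2)) (g := fun x => x) (fun x hx => Real.sqrt_sq (hsp x hx)), cfc_id' ℝ S hS.1.isSelfAdjoint]

open Matrix in
/-- candidate square root of `Wᵀ W`. -/
noncomputable def auxS (n : ℕ) (sa sd r : ℝ) : Matrix (Fin n ⊕ Fin n) (Fin n ⊕ Fin n) ℝ :=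
  fun z w =>
    match z, w with
    | Sum.inl i, Sum.inl j =>
        (if i = j then (sa + sd)/2 else 0) + (r/2 - (sa + sd)/2) * (n : ℝ)⁻¹
    | Sum.inl i, Sum.inr j =>
        (if i = j then (sa - sd)/2 else 0) + (-(r/2) - (sa - sd)/2) * (n : ℝ)⁻¹
    | Sum.inr i, Sum.inl j =>
        (if i = j then (sa - sd)/2 else 0) + (-(r/2) - (sa - sd)/2) * (n : ℝ)⁻¹
    | Sum.inr i, Sum.inr j =>
        (if i = j then (sa + sd)/2 else 0) + (r/2 - (sa + sd)/2) * (n : ℝ)⁻¹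

/-- Gram factor witnessing positive semidefiniteness of `auxS`. -/
noncomputable def auxB (n : ℕ) (c1 c2 c3 : ℝ) : Matrix ((Fin n ⊕ Fin n) ⊕ Fin n) (Fin n ⊕ Fin n) ℝ :=
  fun z w =>
    match z, w with
    | Sum.inl (Sum.inl k), Sum.inl j => (if k = j then c1 else 0) + -c1 * (n : ℝ)⁻¹
    | Sum.inl (Sum.inl k), Sum.inr j => (if k = j then c1 else 0) + -c1 * (n : ℝ)⁻¹
    | Sum.inl (Sum.inr k), Sum.inl j => (if k = j then c2 else 0) + -c2 * (n : ℝ)⁻¹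
    | Sum.inl (Sum.inr k), Sum.inr j => (if k = j then -c2 else 0) + c2 * (n : ℝ)⁻¹
    | Sum.inr k, Sum.inl j => (if k = j then 0 else 0) + c3
    | Sum.inr k, Sum.inr j => (if k = j then 0 else 0) + -c3

lemma sum_if_mul_if (n : ℕ) (i j : Fin n) (x u y v : ℝ) :
    ∑ k : Fin n, ((if i = k then x else 0) + u) * ((if k = j then y else 0) + v)
      = (if i = j then x * y else 0) + (x * v + u * y + (n : ℝ) * (u * v)) := by
  have e : ∀ k : Fin n, ((if i = k then x else 0) + u) * ((if k = j then y else 0) + v)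
      = ((if i = k then (if k = j then x * y else 0) else 0) + (if i = k then x * v else 0))
        + ((if k = j then u * y else 0) + u * v) := by
    intro k; split_ifs <;> ring
  rw [Finset.sum_congr rfl fun k _ => e k]
  simp only [Finset.sum_add_distrib, Finset.sum_ite_eq, Finset.sum_ite_eq',
    Finset.mem_univ, if_true, Finset.sum_const, Finset.card_univ, Fintype.card_fin,
    nsmul_eq_mul]
  split_ifs <;> ring

lemma sum_if_mul_if' (n : ℕ) (i j : Fin n) (x u y v : ℝ) :
    ∑ k : Fin n, ((if k = i then x else 0) + u) * ((if k = j then y else 0) + v)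
      = (if i = j then x * y else 0) + (x * v + u * y + (n : ℝ) * (u * v)) := by
  have e : ∀ k : Fin n, ((if k = i then x else 0) + u) * ((if k = j then y else 0) + v)
      = ((if k = i then (if k = j then x * y else 0) else 0) + (if k = i then x * v else 0))
        + ((if k = j then u * y else 0) + u * v) := by
    intro k; split_ifs <;> ring
  rw [Finset.sum_congr rfl fun k _ => e k]
  simp only [Finset.sum_add_distrib, Finset.sum_ite_eq, Finset.sum_ite_eq',
    Finset.mem_univ, if_true, Finset.sum_const, Finset.card_univ, Fintype.card_fin,
    nsmul_eq_mul]
  split_ifs <;> ring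

lemma auxS_posSemidef (n : ℕ) (sa sd r c1 c2 c3 : ℝ)
    (hc1 : c1 ^ 2 = sa / 2) (hc2 : c2 ^ 2 = sd / 2)
    (hc3 : c3 ^ 2 = r / 2 * ((n : ℝ)⁻¹ * (n : ℝ)⁻¹))
    (hNI : (n : ℝ) * (n : ℝ)⁻¹ = 1) :
    (auxS n sa sd r).PosSemidef := by
  have hB : auxS n sa sd r = (auxB n c1 c2 c3).conjTranspose * auxB n c1 c2 c3 := by
    ext z w
    rcases z with i | i <;> rcases w with j | j <;>
      simp only [Matrix.mul_apply, Matrix.conjTranspose_apply, star_trivial,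
        auxS, auxB, Fintype.sum_sum_type] <;>
      rw [sum_if_mul_if', sum_if_mul_if', sum_if_mul_if'] <;>
      split_ifs with h
    · linear_combination ((-1) + 2*(n:ℝ)⁻¹ + (-1)*(n:ℝ)*(n:ℝ)⁻¹*(n:ℝ)⁻¹) * hc1 + ((-1) + 2*(n:ℝ)⁻¹ + (-1)*(n:ℝ)*(n:ℝ)⁻¹*(n:ℝ)⁻¹) * hc2 + (-(n:ℝ)) * hc3 + ((-1/2)*r*(n:ℝ)⁻¹ + (-1/2)*sd*(n:ℝ)⁻¹ + (-1/2)*sa*(n:ℝ)⁻¹) * hNI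
    · linear_combination (2*(n:ℝ)⁻¹ + (-1)*(n:ℝ)*(n:ℝ)⁻¹*(n:ℝ)⁻¹) * hc1 + (2*(n:ℝ)⁻¹ + (-1)*(n:ℝ)*(n:ℝ)⁻¹*(n:ℝ)⁻¹) * hc2 + (-(n:ℝ)) * hc3 + ((-1/2)*r*(n:ℝ)⁻¹ + (-1/2)*sd*(n:ℝ)⁻¹ + (-1/2)*sa*(n:ℝ)⁻¹) * hNI
    · linear_combination ((-1) + 2*(n:ℝ)⁻¹ + (-1)*(n:ℝ)*(n:ℝ)⁻¹*(n:ℝ)⁻¹) * hc1 + (1 + (-2)*(n:ℝ)⁻¹ + (n:ℝ)*(n:ℝ)⁻¹*(n:ℝ)⁻¹) * hc2 + ((n:ℝ)) * hc3 + ((1/2)*r*(n:ℝ)⁻¹ + (1/2)*sd*(n:ℝ)⁻¹ + (-1/2)*sa*(n:ℝ)⁻¹) * hNI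
    · linear_combination ((-2)*(n:ℝ)⁻¹ + (n:ℝ)*(n:ℝ)⁻¹*(n:ℝ)⁻¹) * hc2 + (2*(n:ℝ)⁻¹ + (-1)*(n:ℝ)*(n:ℝ)⁻¹*(n:ℝ)⁻¹) * hc1 + ((n:ℝ)) * hc3 + ((1/2)*r*(n:ℝ)⁻¹ + (1/2)*sd*(n:ℝ)⁻¹ + (-1/2)*sa*(n:ℝ)⁻¹) * hNI
    · linear_combination ((-1) + 2*(n:ℝ)⁻¹ + (-1)*(n:ℝ)*(n:ℝ)⁻¹*(n:ℝ)⁻¹) * hc1 + (1 + (-2)*(n:ℝ)⁻¹ + (n:ℝ)*(n:ℝ)⁻¹*(n:ℝ)⁻¹) * hc2 + ((n:ℝ)) * hc3 + ((1/2)*r*(n:ℝ)⁻¹ + (1/2)*sd*(n:ℝ)⁻¹ + (-1/2)*sa*(n:ℝ)⁻¹) * hNI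
    · linear_combination ((-2)*(n:ℝ)⁻¹ + (n:ℝ)*(n:ℝ)⁻¹*(n:ℝ)⁻¹) * hc2 + (2*(n:ℝ)⁻¹ + (-1)*(n:ℝ)*(n:ℝ)⁻¹*(n:ℝ)⁻¹) * hc1 + ((n:ℝ)) * hc3 + ((1/2)*r*(n:ℝ)⁻¹ + (1/2)*sd*(n:ℝ)⁻¹ + (-1/2)*sa*(n:ℝ)⁻¹) * hNI
    · linear_combination ((-1) + 2*(n:ℝ)⁻¹ + (-1)*(n:ℝ)*(n:ℝ)⁻¹*(n:ℝ)⁻¹) * hc1 + ((-1) + 2*(n:ℝ)⁻¹ + (-1)*(n:ℝ)*(n:ℝ)⁻¹*(n:ℝ)⁻¹) * hc2 + (-(n:ℝ)) * hc3 + ((-1/2)*r*(n:ℝ)⁻¹ + (-1/2)*sd*(n:ℝ)⁻¹ + (-1/2)*sa*(n:ℝ)⁻¹) * hNI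
    · linear_combination (2*(n:ℝ)⁻¹ + (-1)*(n:ℝ)*(n:ℝ)⁻¹*(n:ℝ)⁻¹) * hc1 + (2*(n:ℝ)⁻¹ + (-1)*(n:ℝ)*(n:ℝ)⁻¹*(n:ℝ)⁻¹) * hc2 + (-(n:ℝ)) * hc3 + ((-1/2)*r*(n:ℝ)⁻¹ + (-1/2)*sd*(n:ℝ)⁻¹ + (-1/2)*sa*(n:ℝ)⁻¹) * hNI
  rw [hB]; exact Matrix.posSemidef_conjTranspose_mul_self _

set_option maxHeartbeats 1000000 in
lemma nuclearNorm_symW_aux (n : ℕ) (a1 a2 b1 b2 α β sa sd r c1 c2 c3 : ℝ)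
    (hβ : β = -α)
    (hNI : (n : ℝ) * (n : ℝ)⁻¹ = 1)
    (hsa : sa ^ 2 = (a1 + b1) ^ 2) (hsd : sd ^ 2 = (a1 - b1) ^ 2)
    (hr : r ^ 2 = (a1 - b1 + n * (a2 - b2)) ^ 2 + 4 * n * α ^ 2)
    (hc1 : c1 ^ 2 = sa / 2) (hc2 : c2 ^ 2 = sd / 2)
    (hc3 : c3 ^ 2 = r / 2 * ((n : ℝ)⁻¹ * (n : ℝ)⁻¹))
    (hlin : a1 + b1 + n * (a2 + b2) = 0) :
    nuclearNorm (symW n a1 a2 b1 b2 α β) = ((n : ℝ) - 1) * (sa + sd) + r := by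
  subst hβ
  have hS := auxS_posSemidef n sa sd r c1 c2 c3 hc1 hc2 hc3 hNI
  have hsq : auxS n sa sd r ^ 2
      = (symW n a1 a2 b1 b2 α (-α)).conjTranspose * symW n a1 a2 b1 b2 α (-α) := by
    rw [pow_two]
    ext z w
    rcases z with i | i <;> rcases w with j | j <;>
      simp only [Matrix.mul_apply, Matrix.conjTranspose_apply, star_trivial,
        auxS, symW, Fintype.sum_sum_type, Fin.sum_univ_two,
        show ((0 : Fin 2) = 0) ↔ True by decide, show ((1 : Fin 2) = 0) ↔ False by decide,
        if_true, if_false] <;>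
      rw [sum_if_mul_if, sum_if_mul_if, sum_if_mul_if', sum_if_mul_if'] <;>
      split_ifs with h
    · linear_combination ((1/2) + (-1)*(n:ℝ)⁻¹ + (1/2)*(n:ℝ)*(n:ℝ)⁻¹*(n:ℝ)⁻¹) * hsa + ((1/2) + (-1)*(n:ℝ)⁻¹ + (1/2)*(n:ℝ)*(n:ℝ)⁻¹*(n:ℝ)⁻¹) * hsd + ((1/2)*(n:ℝ)*(n:ℝ)⁻¹*(n:ℝ)⁻¹) * hr + ((-1)*sd*r*(n:ℝ)⁻¹ + (2)*α*α + (2)*α*α*(n:ℝ)*(n:ℝ)⁻¹ + (1/2)*b2*b2*(n:ℝ)*(n:ℝ)*(n:ℝ)⁻¹ + b1*b2 + b1*b2*(n:ℝ)*(n:ℝ)⁻¹ + (3/2)*b1*b1*(n:ℝ)⁻¹ + (-2)*a2*b2*(n:ℝ) + (-1)*a2*b2*(n:ℝ)*(n:ℝ)*(n:ℝ)⁻¹ + (-1)*a2*b1 + (-1)*a2*b1*(n:ℝ)*(n:ℝ)⁻¹ + (1/2)*a2*a2*(n:ℝ)*(n:ℝ)*(n:ℝ)⁻¹ + (-1)*a1*b2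 + (-1)*a1*b2*(n:ℝ)*(n:ℝ)⁻¹ + (-1)*a1*b1*(n:ℝ)⁻¹ + a1*a2 + a1*a2*(n:ℝ)*(n:ℝ)⁻¹ + (3/2)*a1*a1*(n:ℝ)⁻¹) * hNI + ((-1)*b2 + (1/2)*b2*(n:ℝ)*(n:ℝ)⁻¹ + (-1/2)*b1*(n:ℝ)⁻¹ + (-1)*a2 + (1/2)*a2*(n:ℝ)*(n:ℝ)⁻¹ + (-1/2)*a1*(n:ℝ)⁻¹) * hlin
    · linear_combination ((-1)*(n:ℝ)⁻¹ + (1/2)*(n:ℝ)*(n:ℝ)⁻¹*(n:ℝ)⁻¹) * hsa + ((-1)*(n:ℝ)⁻¹ + (1/2)*(n:ℝ)*(n:ℝ)⁻¹*(n:ℝ)⁻¹) * hsd + ((1/2)*(n:ℝ)*(n:ℝ)⁻¹*(n:ℝ)⁻¹) * hr + ((-1)*sd*r*(n:ℝ)⁻¹ + (2)*α*α + (2)*α*α*(n:ℝ)*(n:ℝ)⁻¹ + (1/2)*b2*b2*(n:ℝ)*(n:ℝ)*(n:ℝ)⁻¹ + b1*b2 + b1*b2*(n:ℝ)*(n:ℝ)⁻¹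 + (3/2)*b1*b1*(n:ℝ)⁻¹ + (-2)*a2*b2*(n:ℝ) + (-1)*a2*b2*(n:ℝ)*(n:ℝ)*(n:ℝ)⁻¹ + (-1)*a2*b1 + (-1)*a2*b1*(n:ℝ)*(n:ℝ)⁻¹ + (1/2)*a2*a2*(n:ℝ)*(n:ℝ)*(n:ℝ)⁻¹ + (-1)*a1*b2 + (-1)*a1*b2*(n:ℝ)*(n:ℝ)⁻¹ + (-1)*a1*b1*(n:ℝ)⁻¹ + a1*a2 + a1*a2*(n:ℝ)*(n:ℝ)⁻¹ + (3/2)*a1*a1*(n:ℝ)⁻¹) * hNI + ((-1)*b2 + (1/2)*b2*(n:ℝ)*(n:ℝ)⁻¹ + (-1/2)*b1*(n:ℝ)⁻¹ + (-1)*a2 + (1/2)*a2*(n:ℝ)*(n:ℝ)⁻¹ + (-1/2)*a1*(n:ℝ)⁻¹) * hlin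
    · linear_combination ((1/2) + (-1)*(n:ℝ)⁻¹ + (1/2)*(n:ℝ)*(n:ℝ)⁻¹*(n:ℝ)⁻¹) * hsa + ((-1/2) + (n:ℝ)⁻¹ + (-1/2)*(n:ℝ)*(n:ℝ)⁻¹*(n:ℝ)⁻¹) * hsd + ((-1/2)*(n:ℝ)*(n:ℝ)⁻¹*(n:ℝ)⁻¹) * hr + (sd*r*(n:ℝ)⁻¹ + (-2)*α*α + (-2)*α*α*(n:ℝ)*(n:ℝ)⁻¹ + (-1)*b2*b2*(n:ℝ) + (-1/2)*b2*b2*(n:ℝ)*(n:ℝ)*(n:ℝ)⁻¹ + (-1)*b1*b2 + (-1)*b1*b2*(n:ℝ)*(n:ℝ)⁻¹ + (-1/2)*b1*b1*(n:ℝ)⁻¹ + a2*b2*(n:ℝ)*(n:ℝ)*(n:ℝ)⁻¹ + a2*b1 + a2*b1*(n:ℝ)*(n:ℝ)⁻¹ + (-1)*a2*a2*(n:ℝ) + (-1/2)*a2*a2*(n:ℝ)*(n:ℝ)*(n:ℝ)⁻¹ + a1*b2 + a1*b2*(n:ℝ)*(n:ℝ)⁻¹ + (3)*a1*b1*(n:ℝ)⁻¹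 + (-1)*a1*a2 + (-1)*a1*a2*(n:ℝ)*(n:ℝ)⁻¹ + (-1/2)*a1*a1*(n:ℝ)⁻¹) * hNI + ((-1)*b2 + (1/2)*b2*(n:ℝ)*(n:ℝ)⁻¹ + (-1/2)*b1*(n:ℝ)⁻¹ + (-1)*a2 + (1/2)*a2*(n:ℝ)*(n:ℝ)⁻¹ + (-1/2)*a1*(n:ℝ)⁻¹) * hlin
    · linear_combination ((-1)*(n:ℝ)⁻¹ + (1/2)*(n:ℝ)*(n:ℝ)⁻¹*(n:ℝ)⁻¹) * hsa + ((n:ℝ)⁻¹ + (-1/2)*(n:ℝ)*(n:ℝ)⁻¹*(n:ℝ)⁻¹) * hsd + ((-1/2)*(n:ℝ)*(n:ℝ)⁻¹*(n:ℝ)⁻¹) * hr + (sd*r*(n:ℝ)⁻¹ + (-2)*α*α + (-2)*α*α*(n:ℝ)*(n:ℝ)⁻¹ + (-1)*b2*b2*(n:ℝ) + (-1/2)*b2*b2*(n:ℝ)*(n:ℝ)*(n:ℝ)⁻¹ + (-1)*b1*b2 + (-1)*b1*b2*(n:ℝ)*(n:ℝ)⁻¹ + (-1/2)*b1*b1*(n:ℝ)⁻¹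 + a2*b2*(n:ℝ)*(n:ℝ)*(n:ℝ)⁻¹ + a2*b1 + a2*b1*(n:ℝ)*(n:ℝ)⁻¹ + (-1)*a2*a2*(n:ℝ) + (-1/2)*a2*a2*(n:ℝ)*(n:ℝ)*(n:ℝ)⁻¹ + a1*b2 + a1*b2*(n:ℝ)*(n:ℝ)⁻¹ + (3)*a1*b1*(n:ℝ)⁻¹ + (-1)*a1*a2 + (-1)*a1*a2*(n:ℝ)*(n:ℝ)⁻¹ + (-1/2)*a1*a1*(n:ℝ)⁻¹) * hNI + ((-1)*b2 + (1/2)*b2*(n:ℝ)*(n:ℝ)⁻¹ + (-1/2)*b1*(n:ℝ)⁻¹ + (-1)*a2 + (1/2)*a2*(n:ℝ)*(n:ℝ)⁻¹ + (-1/2)*a1*(n:ℝ)⁻¹) * hlin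
    · linear_combination ((1/2) + (-1)*(n:ℝ)⁻¹ + (1/2)*(n:ℝ)*(n:ℝ)⁻¹*(n:ℝ)⁻¹) * hsa + ((-1/2) + (n:ℝ)⁻¹ + (-1/2)*(n:ℝ)*(n:ℝ)⁻¹*(n:ℝ)⁻¹) * hsd + ((-1/2)*(n:ℝ)*(n:ℝ)⁻¹*(n:ℝ)⁻¹) * hr + (sd*r*(n:ℝ)⁻¹ + (-2)*α*α + (-2)*α*α*(n:ℝ)*(n:ℝ)⁻¹ + (-1)*b2*b2*(n:ℝ) + (-1/2)*b2*b2*(n:ℝ)*(n:ℝ)*(n:ℝ)⁻¹ + (-1)*b1*b2 + (-1)*b1*b2*(n:ℝ)*(n:ℝ)⁻¹ + (-1/2)*b1*b1*(n:ℝ)⁻¹ + a2*b2*(n:ℝ)*(n:ℝ)*(n:ℝ)⁻¹ + a2*b1 + a2*b1*(n:ℝ)*(n:ℝ)⁻¹ + (-1)*a2*a2*(n:ℝ) + (-1/2)*a2*a2*(n:ℝ)*(n:ℝ)*(n:ℝ)⁻¹ + a1*b2 + a1*b2*(n:ℝ)*(n:ℝ)⁻¹ + (3)*a1*b1*(n:ℝ)⁻¹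 + (-1)*a1*a2 + (-1)*a1*a2*(n:ℝ)*(n:ℝ)⁻¹ + (-1/2)*a1*a1*(n:ℝ)⁻¹) * hNI + ((-1)*b2 + (1/2)*b2*(n:ℝ)*(n:ℝ)⁻¹ + (-1/2)*b1*(n:ℝ)⁻¹ + (-1)*a2 + (1/2)*a2*(n:ℝ)*(n:ℝ)⁻¹ + (-1/2)*a1*(n:ℝ)⁻¹) * hlin
    · linear_combination ((-1)*(n:ℝ)⁻¹ + (1/2)*(n:ℝ)*(n:ℝ)⁻¹*(n:ℝ)⁻¹) * hsa + ((n:ℝ)⁻¹ + (-1/2)*(n:ℝ)*(n:ℝ)⁻¹*(n:ℝ)⁻¹) * hsd + ((-1/2)*(n:ℝ)*(n:ℝ)⁻¹*(n:ℝ)⁻¹) * hr + (sd*r*(n:ℝ)⁻¹ + (-2)*α*α + (-2)*α*α*(n:ℝ)*(n:ℝ)⁻¹ + (-1)*b2*b2*(n:ℝ) + (-1/2)*b2*b2*(n:ℝ)*(n:ℝ)*(n:ℝ)⁻¹ + (-1)*b1*b2 + (-1)*b1*b2*(n:ℝ)*(n:ℝ)⁻¹ + (-1/2)*b1*b1*(n:ℝ)⁻¹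 + a2*b2*(n:ℝ)*(n:ℝ)*(n:ℝ)⁻¹ + a2*b1 + a2*b1*(n:ℝ)*(n:ℝ)⁻¹ + (-1)*a2*a2*(n:ℝ) + (-1/2)*a2*a2*(n:ℝ)*(n:ℝ)*(n:ℝ)⁻¹ + a1*b2 + a1*b2*(n:ℝ)*(n:ℝ)⁻¹ + (3)*a1*b1*(n:ℝ)⁻¹ + (-1)*a1*a2 + (-1)*a1*a2*(n:ℝ)*(n:ℝ)⁻¹ + (-1/2)*a1*a1*(n:ℝ)⁻¹) * hNI + ((-1)*b2 + (1/2)*b2*(n:ℝ)*(n:ℝ)⁻¹ + (-1/2)*b1*(n:ℝ)⁻¹ + (-1)*a2 + (1/2)*a2*(n:ℝ)*(n:ℝ)⁻¹ + (-1/2)*a1*(n:ℝ)⁻¹) * hlin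
    · linear_combination ((1/2) + (-1)*(n:ℝ)⁻¹ + (1/2)*(n:ℝ)*(n:ℝ)⁻¹*(n:ℝ)⁻¹) * hsa + ((1/2) + (-1)*(n:ℝ)⁻¹ + (1/2)*(n:ℝ)*(n:ℝ)⁻¹*(n:ℝ)⁻¹) * hsd + ((1/2)*(n:ℝ)*(n:ℝ)⁻¹*(n:ℝ)⁻¹) * hr + ((-1)*sd*r*(n:ℝ)⁻¹ + (2)*α*α + (2)*α*α*(n:ℝ)*(n:ℝ)⁻¹ + (1/2)*b2*b2*(n:ℝ)*(n:ℝ)*(n:ℝ)⁻¹ + b1*b2 + b1*b2*(n:ℝ)*(n:ℝ)⁻¹ + (3/2)*b1*b1*(n:ℝ)⁻¹ + (-2)*a2*b2*(n:ℝ) + (-1)*a2*b2*(n:ℝ)*(n:ℝ)*(n:ℝ)⁻¹ + (-1)*a2*b1 + (-1)*a2*b1*(n:ℝ)*(n:ℝ)⁻¹ + (1/2)*a2*a2*(n:ℝ)*(n:ℝ)*(n:ℝ)⁻¹ + (-1)*a1*b2 + (-1)*a1*b2*(n:ℝ)*(n:ℝ)⁻¹ + (-1)*a1*b1*(n:ℝ)⁻¹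 + a1*a2 + a1*a2*(n:ℝ)*(n:ℝ)⁻¹ + (3/2)*a1*a1*(n:ℝ)⁻¹) * hNI + ((-1)*b2 + (1/2)*b2*(n:ℝ)*(n:ℝ)⁻¹ + (-1/2)*b1*(n:ℝ)⁻¹ + (-1)*a2 + (1/2)*a2*(n:ℝ)*(n:ℝ)⁻¹ + (-1/2)*a1*(n:ℝ)⁻¹) * hlin
    · linear_combination ((-1)*(n:ℝ)⁻¹ + (1/2)*(n:ℝ)*(n:ℝ)⁻¹*(n:ℝ)⁻¹) * hsa + ((-1)*(n:ℝ)⁻¹ + (1/2)*(n:ℝ)*(n:ℝ)⁻¹*(n:ℝ)⁻¹) * hsd + ((1/2)*(n:ℝ)*(n:ℝ)⁻¹*(n:ℝ)⁻¹) * hr + ((-1)*sd*r*(n:ℝ)⁻¹ + (2)*α*α + (2)*α*α*(n:ℝ)*(n:ℝ)⁻¹ + (1/2)*b2*b2*(n:ℝ)*(n:ℝ)*(n:ℝ)⁻¹ + b1*b2 + b1*b2*(n:ℝ)*(n:ℝ)⁻¹ + (3/2)*b1*b1*(n:ℝ)⁻¹ + (-2)*a2*b2*(n:ℝ) + (-1)*a2*b2*(n:ℝ)*(n:ℝ)*(n:ℝ)⁻¹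 + (-1)*a2*b1 + (-1)*a2*b1*(n:ℝ)*(n:ℝ)⁻¹ + (1/2)*a2*a2*(n:ℝ)*(n:ℝ)*(n:ℝ)⁻¹ + (-1)*a1*b2 + (-1)*a1*b2*(n:ℝ)*(n:ℝ)⁻¹ + (-1)*a1*b1*(n:ℝ)⁻¹ + a1*a2 + a1*a2*(n:ℝ)*(n:ℝ)⁻¹ + (3/2)*a1*a1*(n:ℝ)⁻¹) * hNI + ((-1)*b2 + (1/2)*b2*(n:ℝ)*(n:ℝ)⁻¹ + (-1/2)*b1*(n:ℝ)⁻¹ + (-1)*a2 + (1/2)*a2*(n:ℝ)*(n:ℝ)⁻¹ + (-1/2)*a1*(n:ℝ)⁻¹) * hlin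
  have hEq := psd_sqrt_eq _ _
    (Matrix.posSemidef_conjTranspose_mul_self (symW n a1 a2 b1 b2 α (-α))) hS hsq
  unfold nuclearNorm
  rw [← hEq]
  simp only [Matrix.trace, Matrix.diag_apply, Fintype.sum_sum_type, auxS,
    eq_self_iff_true, if_true, Finset.sum_add_distrib, Finset.sum_const,
    Finset.card_univ, Fintype.card_fin, nsmul_eq_mul]
  linear_combination (r - sa - sd) * hNI

lemma nuclearNorm_symW (n : ℕ) (hn : (n : ℝ) ≠ 0) (a1 a2 b1 b2 α β : ℝ) (hβ : β = -α)
    (hlin : a1 + b1 + n * (a2 + b2) = 0) :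
    nuclearNorm (symW n a1 a2 b1 b2 α β)
      = ((n : ℝ) - 1) * (|a1 + b1| + |a1 - b1|)
        + Real.sqrt ((a1 - b1 + n * (a2 - b2)) ^ 2 + 4 * n * α ^ 2) := by
  have hX : (0:ℝ) ≤ (a1 - b1 + n * (a2 - b2)) ^ 2 + 4 * n * α ^ 2 := by positivity
  refine nuclearNorm_symW_aux n a1 a2 b1 b2 α β (|a1 + b1|) (|a1 - b1|)
      (Real.sqrt ((a1 - b1 + n * (a2 - b2)) ^ 2 + 4 * n * α ^ 2))
      (Real.sqrt (|a1 + b1| / 2)) (Real.sqrt (|a1 - b1| / 2))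
      (Real.sqrt (Real.sqrt ((a1 - b1 + n * (a2 - b2)) ^ 2 + 4 * n * α ^ 2) / 2) * (n : ℝ)⁻¹)
      hβ (mul_inv_cancel₀ hn) (sq_abs _) (sq_abs _) (Real.sq_sqrt hX)
      (Real.sq_sqrt (by positivity)) (Real.sq_sqrt (by positivity)) ?_ hlin
  rw [mul_pow, Real.sq_sqrt (by positivity)]
  ring

/-- Theorem 2 (failure without identity supervision): if a symmetric-form matrix
satisfying `β = −α`, `a1+b1+n·(a2+b2) = 0`, `a1 ≥ 1` and `a1+a2+α ≥ b1+b2+β+1`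
minimizes the nuclear norm among all symmetric-form matrices satisfying these same
four conditions, then its OOD margin is strictly negative for every `i`. -/
theorem negative_ood_margin (n : ℕ) (hn : 1 < n)
    (a1 a2 b1 b2 α β : ℝ)
    (hβ : β = -α) (hlin : a1 + b1 + n * (a2 + b2) = 0)
    (ha1 : 1 ≤ a1) (hcon : b1 + b2 + β + 1 ≤ a1 + a2 + α)
    (hmin : ∀ a1' a2' b1' b2' α' β' : ℝ,
      β' = -α' → a1' + b1' + n * (a2' + b2') = 0 →
      1 ≤ a1' → b1' + b2' + β' + 1 ≤ a1' + a2' + α' →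
      nuclearNorm (symW n a1 a2 b1 b2 α β) ≤ nuclearNorm (symW n a1' a2' b1' b2' α' β')) :
    ∀ i : Fin n, oodMargin n (symW n a1 a2 b1 b2 α β) i < 0 := by
  subst hβ
  intro i
  have hn2 : (2 : ℕ) ≤ n := hn
  have hn2R : (2 : ℝ) ≤ (n : ℝ) := by exact_mod_cast hn2
  have hnR : (n : ℝ) ≠ 0 := by intro h; rw [h] at hn2R; norm_num at hn2R
  have hne1 : (n : ℝ) - 1 ≠ 0 := by intro h; nlinarith
  have key : b1 + b2 - (a1 + a2) < 0 := by
    by_contra hk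
    push_neg at hk
    have hα : 1 ≤ 2 * α := by linarith
    have hlin' : 1 + -(1/((n:ℝ)-1)) + (n:ℝ) * (-(1/(n:ℝ)) + 1/((n:ℝ)*((n:ℝ)-1))) = 0 := by
      field_simp
      ring
    have hcon' : -(1/((n:ℝ)-1)) + 1/((n:ℝ)*((n:ℝ)-1)) + 0 + 1 ≤ 1 + -(1/(n:ℝ)) + 0 := by
      apply le_of_eq
      field_simp
      ring
    have hm := hmin 1 (-(1/(n:ℝ))) (-(1/((n:ℝ)-1))) (1/((n:ℝ)*((n:ℝ)-1))) 0 0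
      (by norm_num) hlin' le_rfl hcon'
    have hval' : nuclearNorm (symW n 1 (-(1/(n:ℝ))) (-(1/((n:ℝ)-1))) (1/((n:ℝ)*((n:ℝ)-1))) 0 0)
        = 2 * ((n:ℝ) - 1) := by
      rw [nuclearNorm_symW n hnR _ _ _ _ 0 0 (by norm_num) hlin']
      have hx : (0:ℝ) ≤ 1/((n:ℝ)-1) := div_nonneg (by norm_num) (by linarith)
      have e1 : |1 + -(1/((n:ℝ)-1))| = 1 + -(1/((n:ℝ)-1)) := by
        apply abs_of_nonneg
        have : 1/((n:ℝ)-1) ≤ 1 := by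
          rw [div_le_one (by linarith)]; linarith
        linarith
      have e2 : |1 - -(1/((n:ℝ)-1))| = 1 - -(1/((n:ℝ)-1)) := abs_of_nonneg (by linarith)
      have e3 : 1 - -(1/((n:ℝ)-1)) + (n:ℝ) * (-(1/(n:ℝ)) - 1/((n:ℝ)*((n:ℝ)-1))) = 0 := by
        field_simp
        ring
      rw [e1, e2, e3]
      norm_num
      ring
    have hval := nuclearNorm_symW n hnR a1 a2 b1 b2 α (-α) rfl hlin
    have habs : 2 ≤ |a1 + b1| + |a1 - b1| := by
      rcases le_or_gt 0 (a1 - b1) with h | h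
      · linarith [le_abs_self (a1 + b1), le_abs_self (a1 - b1)]
      · linarith [le_abs_self (a1 + b1), neg_abs_le (a1 - b1)]
    have hr1 : 1 ≤ Real.sqrt ((a1 - b1 + n * (a2 - b2)) ^ 2 + 4 * n * α ^ 2) := by
      have h2 : (1:ℝ) ≤ (a1 - b1 + n * (a2 - b2)) ^ 2 + 4 * n * α ^ 2 := by
        nlinarith [sq_nonneg (a1 - b1 + (n:ℝ) * (a2 - b2)), sq_nonneg (2*α - 1)]
      calc (1:ℝ) = Real.sqrt 1 := Real.sqrt_one.symm
        _ ≤ _ := Real.sqrt_le_sqrt h2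
    have hmul : ((n:ℝ) - 1) * 2 ≤ ((n:ℝ) - 1) * (|a1 + b1| + |a1 - b1|) :=
      mul_le_mul_of_nonneg_left habs (by linarith)
    linarith
  -- conclude
  have hbdd : BddBelow {v : ℝ | ∃ y : Fin n ⊕ Fin n, y ≠ Sum.inr i ∧
      v = oodLogit n (symW n a1 a2 b1 b2 α (-α)) i (Sum.inr i)
        - oodLogit n (symW n a1 a2 b1 b2 α (-α)) i y} := by
    apply Set.Finite.bddBelow
    apply Set.Finite.subset (Set.finite_range
      (fun y : Fin n ⊕ Fin n => oodLogit n (symW n a1 a2 b1 b2 α (-α)) i (Sum.inr i)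
        - oodLogit n (symW n a1 a2 b1 b2 α (-α)) i y))
    rintro v ⟨y, -, rfl⟩
    exact ⟨y, rfl⟩
  have hmem : (oodLogit n (symW n a1 a2 b1 b2 α (-α)) i (Sum.inr i)
      - oodLogit n (symW n a1 a2 b1 b2 α (-α)) i (Sum.inl i)) ∈
      {v : ℝ | ∃ y : Fin n ⊕ Fin n, y ≠ Sum.inr i ∧
      v = oodLogit n (symW n a1 a2 b1 b2 α (-α)) i (Sum.inr i)
        - oodLogit n (symW n a1 a2 b1 b2 α (-α)) i y} :=
    ⟨Sum.inl i, by simp, rfl⟩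
  refine lt_of_le_of_lt (csInf_le hbdd hmem) ?_
  have hcomp : oodLogit n (symW n a1 a2 b1 b2 α (-α)) i (Sum.inr i)
      - oodLogit n (symW n a1 a2 b1 b2 α (-α)) i (Sum.inl i)
      = b1 + b2 - (a1 + a2) := by
    simp only [oodLogit, symW, eq_self_iff_true, if_true,
      show ((0 : Fin 2) = 0) ↔ True by decide, show ((1 : Fin 2) = 0) ↔ False by decide,
      if_false]
    ring
  rw [hcomp]
  exact key
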